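/- If the all-ones vector 𝟙 ∈ ℝᵏ lies in the column space of R, then every vector (x_K, x_S) ∈ ℝᵏ × ℝˢ in the nullspace of A has x_K = 0 (i.e., the support of the split graph is contained in the independent set S). -/

import Mathlib

open Matrix

/-- If the all-ones vector lies in the column space of `R`,
then every kernel vector `(x_K, x_S)` of `A` has `x_K = 0`. -/
theorem stmt_4 (k s : ℕ)
    (R : Matrix (Fin k) (Fin s) ℝ) (hR01 : ∀ i j, R i j = 0 ∨ R i j = 1)
    (J : Matrix (Fin k) (Fin k) ℝ) (hJ : ∀ i j, J i j = 1)
    (A : Matrix (Fin k ⊕ Fin s) (Fin k ⊕ Fin s) ℝ)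
    (hA : A = Matrix.fromBlocks (J - 1) R Rᵀ 0)
    (hone : ∃ y : Fin s → ℝ, R.mulVec y = fun _ => 1) :
    ∀ (xK : Fin k → ℝ) (xS : Fin s → ℝ),
      A.mulVec (Sum.elim xK xS) = 0 → xK = 0 := by
  intro xK xS h
  subst hA
  rw [fromBlocks_mulVec] at h
  have h1 : ∀ i, (J - 1).mulVec xK i + R.mulVec xS i = 0 := fun i => by
    have := congrFun h (Sum.inl i); simpa using this
  have h2 : Rᵀ.mulVec xK = 0 := by
    funext j
    have := congrFun h (Sum.inr j); simpa using this
  obtain ⟨y, hy⟩ := hone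
  -- sum of xK is zero
  have hsum : ∑ i, xK i = 0 := by
    have : (R.mulVec y) ⬝ᵥ xK = 0 := by
      rw [dotProduct_comm, dotProduct_mulVec, ← mulVec_transpose, h2, zero_dotProduct]
    rw [hy] at this
    simpa [dotProduct] using this
  -- xK = R.mulVec xS
  have hxK : xK = R.mulVec xS := by
    funext i
    have hJm : (J - 1).mulVec xK i = -xK i := by
      simp [mulVec, dotProduct, Matrix.sub_apply, one_apply, hJ, sub_mul,
        Finset.sum_sub_distrib, hsum, ite_mul]
    have := h1 i
    rw [hJm] at this
    linarith
  have hz : R.mulVec xS ⬝ᵥ R.mulVec xS = 0 := by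
    have : xS ⬝ᵥ Rᵀ.mulVec xK = 0 := by rw [h2, dotProduct_zero]
    rw [hxK] at this
    rwa [dotProduct_mulVec, vecMul_transpose] at this
  have := dotProduct_self_eq_zero.mp hz
  rw [hxK, this]
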